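/- For every n ≥ 0, the number of bilaterally symmetric 2-noncrossing (i.e. noncrossing) matchings satisfies bsm_{2n}(1) = C(2n, n) and bsm_{2n+1}(1) = (1/2)·C(2n+2, n+1), where C(a,b) denotes the binomial coefficient. -/

import Mathlib

open scoped BigOperators

/-- A matching on `[2n] = Fin (2n)` encoded as a fixed-point-free involution: the
arcs of the matching are the pairs `{i, f i}`. -/
def IsMatchingInv {m : ℕ} (f : Equiv.Perm (Fin m)) : Prop :=
  ∀ i, f (f i) = i ∧ f i ≠ i

/-- The matching is bilaterally symmetric: it equals its reflection in the vertical
axis, i.e. `(i,j)` is an arc iff `(2n+1-j, 2n+1-i)` is (via `Fin.rev`). -/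
def IsBilatSym {m : ℕ} (f : Equiv.Perm (Fin m)) : Prop :=
  ∀ i, f i.rev = (f i).rev

/-- The matching `f` has a `k`-crossing: arcs `(i₁,j₁),…,(i_k,j_k)` with
`i₁ < ⋯ < i_k < j₁ < ⋯ < j_k`. -/
def HasCrossing {m : ℕ} (f : Equiv.Perm (Fin m)) (k : ℕ) : Prop :=
  ∃ a b : Fin k → Fin m, StrictMono a ∧ StrictMono b ∧
    (∀ s t : Fin k, a s < b t) ∧ ∀ s, f (a s) = b s

/-- `bsm_n(d)`: the number of bilaterally symmetric `(d+1)`-noncrossing matchings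
on `[2n]`. -/
noncomputable def bsmCount (n d : ℕ) : ℕ :=
  Nat.card {f : Equiv.Perm (Fin (2 * n)) //
    IsMatchingInv f ∧ IsBilatSym f ∧ ¬ HasCrossing f (d + 1)}

namespace Bsm

def eps (b : Bool) : ℤ := if b then 1 else -1

def ht (w : ℕ → Bool) : ℕ → ℤ
  | 0 => 0
  | k+1 => ht w k + eps (w k)

lemma ht_succ (w : ℕ → Bool) (k : ℕ) : ht w (k+1) = ht w k + eps (w k) := rfl

lemma eps_cases (b : Bool) : (eps b = 1 ∧ b = true) ∨ (eps b = -1 ∧ b = false) := by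
  cases b <;> simp [eps]

lemma ht_congr {w w' : ℕ → Bool} : ∀ {k : ℕ}, (∀ i, i < k → w i = w' i) → ht w k = ht w' k
  | 0, _ => rfl
  | (k+1), h => by
      rw [ht_succ, ht_succ, ht_congr (fun i hi => h i (hi.trans (Nat.lt_succ_self k))),
        h k (Nat.lt_succ_self k)]

lemma ht_eq_sum (w : ℕ → Bool) (k : ℕ) : ht w k = ∑ i ∈ Finset.range k, eps (w i) := by
  induction k with
  | zero => rfl
  | succ k ih => rw [ht_succ, Finset.sum_range_succ, ih]

lemma ht_diff (w : ℕ → Bool) {a b : ℕ} (h : a ≤ b) :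
    ht w b = ht w a + ∑ i ∈ Finset.Ico a b, eps (w i) := by
  rw [ht_eq_sum, ht_eq_sum, Finset.range_eq_Ico,
    ← Finset.sum_Ico_consecutive _ (Nat.zero_le a) h, Finset.range_eq_Ico]

lemma sum_eps (w : ℕ → Bool) (s : Finset ℕ) :
    ∑ i ∈ s, eps (w i) =
      ((s.filter (fun i => w i = true)).card : ℤ) - (s.filter (fun i => w i = false)).card := by
  rw [← Finset.sum_filter_add_sum_filter_not s (fun i => w i = true)]
  have h1 : ∑ i ∈ s.filter (fun i => w i = true), eps (w i)
      = ((s.filter (fun i => w i = true)).card : ℤ) := by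
    rw [Finset.sum_congr rfl (fun i hi => ?_), Finset.sum_const, nsmul_eq_mul, mul_one]
    simp only [Finset.mem_filter] at hi
    rw [hi.2]; rfl
  have h2 : ∑ i ∈ s.filter (fun i => ¬ (w i = true)), eps (w i)
      = -((s.filter (fun i => w i = false)).card : ℤ) := by
    have : s.filter (fun i => ¬ (w i = true)) = s.filter (fun i => w i = false) := by
      apply Finset.filter_congr; intro i _; simp
    rw [this, Finset.sum_congr rfl (fun i hi => ?_), Finset.sum_const, nsmul_eq_mul, mul_neg_one]
    simp only [Finset.mem_filter] at hi
    rw [hi.2]; rfl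
  rw [h1, h2]; ring

/-- The symmetric characterization of an arc `(i,j)` in a noncrossing matching,
in terms of the word `w` alone. -/
def Char (w : ℕ → Bool) (i j : ℕ) : Prop :=
  i < j ∧ ht w (j+1) = ht w i ∧ ∀ k, i < k → k ≤ j → ht w i < ht w k

lemma charUniqR {w : ℕ → Bool} {i j₁ j₂ : ℕ} (h1 : Char w i j₁) (h2 : Char w i j₂) :
    j₁ = j₂ := by
  by_contra hne
  rcases Nat.lt_or_ge j₁ j₂ with h | h
  · exact absurd h1.2.1 (ne_of_gt (h2.2.2 (j₁+1) (Nat.lt_succ_of_lt h1.1) h))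
  · have h' : j₂ < j₁ := lt_of_le_of_ne h (fun e => hne e.symm)
    exact absurd h2.2.1 (ne_of_gt (h1.2.2 (j₂+1) (Nat.lt_succ_of_lt h2.1) h'))

lemma charUniqL {w : ℕ → Bool} {i₁ i₂ j : ℕ} (h1 : Char w i₁ j) (h2 : Char w i₂ j) :
    i₁ = i₂ := by
  by_contra hne
  rcases Nat.lt_or_ge i₁ i₂ with h | h
  · have := h1.2.2 i₂ h (le_of_lt h2.1)
    have e : ht w i₂ = ht w i₁ := by rw [← h2.2.1, h1.2.1]
    omega
  · have h' : i₂ < i₁ := lt_of_le_of_ne h (fun e => hne e.symm)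
    have := h2.2.2 i₁ h' (le_of_lt h1.1)
    have e : ht w i₂ = ht w i₁ := by rw [← h2.2.1, h1.2.1]
    omega

lemma existsCl {w : ℕ → Bool} {M : ℕ} (hOk : ∀ k, k ≤ M → 0 ≤ ht w k)
    (hM : ht w M = 0) {i : ℕ} (hi : i < M) (hw : w i = true) :
    ∃ j, j < M ∧ Char w i j ∧ w j = false := by
  have hstep : ht w (i+1) = ht w i + 1 := by rw [ht_succ, hw]; rfl
  have hex : ∃ t, i + 1 ≤ t ∧ ht w t ≤ ht w i := ⟨M, hi, by rw [hM]; exact hOk i (le_of_lt hi)⟩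
  classical
  obtain ⟨h1, h2⟩ := Nat.find_spec hex
  have hmin : ∀ t, i + 1 ≤ t → t < Nat.find hex → ht w i < ht w t := by
    intro t hta htb
    have := Nat.find_min hex htb
    push_neg at this
    exact this hta
  have ht0M : Nat.find hex ≤ M := Nat.find_min' hex ⟨hi, by rw [hM]; exact hOk i (le_of_lt hi)⟩
  have ht0ne : Nat.find hex ≠ i + 1 := by
    intro e; rw [e] at h2; omega
  obtain ⟨j, hj⟩ : ∃ j, Nat.find hex = j + 1 := ⟨Nat.find hex - 1, by omega⟩
  have hji : i + 1 ≤ j := by omega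
  have hjlt : ht w i < ht w j := hmin j hji (by omega)
  have hstepj : ht w (j+1) = ht w j + eps (w j) := rfl
  have hj1 : ht w (j+1) ≤ ht w i := by rw [← hj]; exact h2
  rcases eps_cases (w j) with ⟨he, _⟩ | ⟨he, hwj⟩
  · rw [he] at hstepj; omega
  · refine ⟨j, by omega, ⟨by omega, by omega, ?_⟩, hwj⟩
    intro k hk1 hk2
    exact hmin k (by omega) (by omega)

lemma existsOp {w : ℕ → Bool} {M : ℕ} (hOk : ∀ k, k ≤ M → 0 ≤ ht w k)
    {j : ℕ} (hj : j < M) (hw : w j = false) :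
    ∃ i, Char w i j ∧ w i = true := by
  classical
  have hstep : ht w (j+1) = ht w j - 1 := by rw [ht_succ, hw]; simp [eps]; ring
  have hc : 0 ≤ ht w (j+1) := hOk (j+1) hj
  set c := ht w (j+1) with hcd
  set i0 := Nat.findGreatest (fun t => ht w t ≤ c) j with hi0
  have hP0 : ht w 0 ≤ c := by show (0:ℤ) ≤ c; exact hc
  have hspec : ht w i0 ≤ c := Nat.findGreatest_spec (P := fun t => ht w t ≤ c) (Nat.zero_le j) hP0
  have hgr : ∀ k, i0 < k → k ≤ j → c < ht w k := by
    intro k h1 h2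
    have := Nat.findGreatest_is_greatest (P := fun t => ht w t ≤ c) h1 h2
    omega
  have hi0j : i0 < j := by
    rcases Nat.lt_or_ge i0 j with h | h
    · exact h
    · have hij : i0 ≤ j := Nat.findGreatest_le j
      have : i0 = j := le_antisymm hij h
      rw [this] at hspec; omega
  have hstep0 : ht w (i0+1) = ht w i0 + eps (w i0) := rfl
  have h1 : c < ht w (i0+1) := hgr (i0+1) (Nat.lt_succ_self i0) hi0j
  rcases eps_cases (w i0) with ⟨he, hwi⟩ | ⟨he, _⟩
  · have hval : ht w i0 = c := by rw [he] at hstep0; omega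
    refine ⟨i0, ⟨hi0j, by omega, ?_⟩, hwi⟩
    intro k hk1 hk2
    have := hgr k hk1 hk2; omega
  · rw [he] at hstep0; omega


lemma eps_not (b : Bool) : eps (!b) = - eps b := by cases b <;> simp [eps]

lemma ht_reflAux {w : ℕ → Bool} {M : ℕ} (apal : ∀ k, k < M → w (M-1-k) = !w k) :
    ∀ k, k ≤ M → ht w (M - k) - ht w k = ht w M := by
  intro k
  induction k with
  | zero => intro _; simp [ht]
  | succ k ih =>
      intro hk
      have hk' : k ≤ M := by omega
      have e1 : M - k = (M - (k+1)) + 1 := by omega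
      have e0 : M - 1 - k = M - (k+1) := by omega
      have e2 : ht w (M - k) = ht w (M - (k+1)) + eps (w (M - (k+1))) := by
        rw [e1, ht_succ]
      have e3 : w (M - (k+1)) = !w k := by rw [← e0]; exact apal k (by omega)
      have e4 : eps (w (M-(k+1))) = - eps (w k) := by rw [e3, eps_not]
      have e5 : ht w (k+1) = ht w k + eps (w k) := rfl
      have h6 := ih hk'
      linarith

lemma ht_M_zero {w : ℕ → Bool} {N : ℕ} (apal : ∀ k, k < 2*N → w (2*N-1-k) = !w k) :
    ht w (2*N) = 0 := by
  have := ht_reflAux apal N (by omega)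
  have e : 2*N - N = N := by omega
  rw [e] at this
  omega

lemma ht_refl {w : ℕ → Bool} {N : ℕ} (apal : ∀ k, k < 2*N → w (2*N-1-k) = !w k) :
    ∀ k, k ≤ 2*N → ht w (2*N - k) = ht w k := by
  intro k hk
  have := ht_reflAux apal k hk
  have := ht_M_zero apal
  omega

lemma char_refl {w : ℕ → Bool} {N : ℕ} (apal : ∀ k, k < 2*N → w (2*N-1-k) = !w k)
    {i j : ℕ} (hij : Char w i j) (hjM : j < 2*N) :
    Char w (2*N-1-j) (2*N-1-i) := by
  set M := 2*N with hMdef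
  have hsym : ∀ k, k ≤ M → ht w (M - k) = ht w k := ht_refl apal
  obtain ⟨hlt, heq, hmid⟩ := hij
  have hiM : i < M := lt_trans hlt hjM
  refine ⟨by omega, ?_, ?_⟩
  · have e1 : (M-1-i) + 1 = M - i := by omega
    have e2 : M - 1 - j = M - (j+1) := by omega
    rw [e1, e2, hsym i (by omega), hsym (j+1) (by omega), heq]
  · intro k hk1 hk2
    have hkM : k ≤ M := by omega
    have e2 : M - 1 - j = M - (j+1) := by omega
    have e3 : ht w (M-1-j) = ht w i := by
      rw [e2, hsym (j+1) (by omega), heq]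
    have e4 : ht w k = ht w (M - (M - k)) := by congr 1; omega
    have e5 : ht w (M - (M-k)) = ht w (M - k) := hsym (M-k) (by omega)
    have h6 : ht w i < ht w (M - k) := hmid (M-k) (by omega) (by omega)
    omega

lemma mk_crossing {M : ℕ} (f : Equiv.Perm (Fin M)) {x1 x2 y1 y2 : Fin M}
    (h1 : x1 < x2) (h2 : x2 < y1) (h3 : y1 < y2) (e1 : f x1 = y1) (e2 : f x2 = y2) :
    HasCrossing f 2 := by
  refine ⟨![x1, x2], ![y1, y2], ?_, ?_, ?_, ?_⟩
  · intro a b hab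
    fin_cases a <;> fin_cases b <;> simp_all <;> omega
  · intro a b hab
    fin_cases a <;> fin_cases b <;> simp_all <;> omega
  · intro s t
    fin_cases s <;> fin_cases t <;> simp_all
    · omega
    · omega
    · omega
  · intro s
    fin_cases s <;> simp_all

lemma exists_matching (N : ℕ) (w : ℕ → Bool)
    (apal : ∀ k, k < 2*N → w (2*N-1-k) = !w k)
    (hOk : ∀ k, k ≤ 2*N → 0 ≤ ht w k) :
    ∃ f : Equiv.Perm (Fin (2*N)), IsMatchingInv f ∧ IsBilatSym f ∧ ¬ HasCrossing f 2 ∧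
      ∀ i : Fin (2*N), (i < f i ↔ w i.val = true) := by
  classical
  set M := 2*N with hMdef
  have hM0 : ht w M = 0 := ht_M_zero apal
  have key : ∀ i : Fin M, ∃ j : Fin M,
      (w i.val = true → Char w i.val j.val ∧ w j.val = false) ∧
      (w i.val = false → Char w j.val i.val ∧ w j.val = true) := by
    intro i
    cases hwi : w i.val with
    | true =>
        obtain ⟨j, hjM, hc, hcl⟩ := existsCl hOk hM0 i.isLt hwi
        exact ⟨⟨j, hjM⟩, fun _ => ⟨hc, hcl⟩, fun h => absurd h (by decide)⟩
    | false =>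
        obtain ⟨i0, hc, hop⟩ := existsOp hOk i.isLt hwi
        exact ⟨⟨i0, lt_trans hc.1 i.isLt⟩, fun h => absurd h (by decide),
          fun _ => ⟨hc, hop⟩⟩
  choose g hg using key
  have ginv : Function.Involutive g := by
    intro i
    cases hwi : w i.val with
    | true =>
        obtain ⟨hc, hcl⟩ := (hg i).1 hwi
        obtain ⟨hc2, _⟩ := (hg (g i)).2 hcl
        exact Fin.ext (charUniqL hc2 hc)
    | false =>
        obtain ⟨hc, hop⟩ := (hg i).2 hwi
        obtain ⟨hc2, _⟩ := (hg (g i)).1 hop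
        exact Fin.ext (charUniqR hc2 hc)
  have gword : ∀ i, i < g i ↔ w i.val = true := by
    intro i
    cases hwi : w i.val with
    | true =>
        obtain ⟨hc, _⟩ := (hg i).1 hwi
        simpa using hc.1
    | false =>
        obtain ⟨hc, _⟩ := (hg i).2 hwi
        constructor
        · intro h
          have := hc.1
          have : (g i : ℕ) < i := this
          have : (i : ℕ) < g i := h
          omega
        · intro h; simp at h
  refine ⟨Function.Involutive.toPerm g ginv, ?_, ?_, ?_, ?_⟩
  · intro i
    refine ⟨ginv i, ?_⟩
    intro h
    have h' : (g i : ℕ) = i := congrArg Fin.val h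
    cases hwi : w i.val with
    | true => have := ((hg i).1 hwi).1.1; omega
    | false => have := ((hg i).2 hwi).1.1; omega
  · -- symmetry
    intro i
    show g i.rev = (g i).rev
    have hvrev : ∀ t : Fin M, (t.rev : ℕ) = M - 1 - t := by
      intro t; rw [Fin.val_rev]; omega
    cases hwi : w i.val with
    | true =>
        obtain ⟨hc, hcl⟩ := (hg i).1 hwi
        have hcr : Char w (M-1-(g i)) (M-1-i) := char_refl apal hc (g i).isLt
        have hwrev : w (i.rev : ℕ) = false := by
          rw [hvrev i]
          have := apal i.val i.isLt
          rw [this, hwi]; rfl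
        obtain ⟨hc2, _⟩ := (hg i.rev).2 hwrev
        rw [hvrev i] at hc2
        have := charUniqL hc2 hcr
        apply Fin.ext
        rw [this, hvrev (g i)]
    | false =>
        obtain ⟨hc, hop⟩ := (hg i).2 hwi
        have hcr : Char w (M-1-i) (M-1-(g i)) := char_refl apal hc i.isLt
        have hwrev : w (i.rev : ℕ) = true := by
          rw [hvrev i]
          have := apal i.val i.isLt
          rw [this, hwi]; rfl
        obtain ⟨hc2, _⟩ := (hg i.rev).1 hwrev
        rw [hvrev i] at hc2
        have := charUniqR hc2 hcr
        apply Fin.ext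
        rw [this, hvrev (g i)]
  · -- noncrossing
    rintro ⟨a, b, ha, hb, hab, harc⟩
    have h01 : (0 : Fin 2) < 1 := by decide
    have ha01 : a 0 < a 1 := ha h01
    have hb01 : b 0 < b 1 := hb h01
    have harc0 : g (a 0) = b 0 := harc 0
    have harc1 : g (a 1) = b 1 := harc 1
    have hw0 : w (a 0).val = true := by
      have := hab 0 0
      rw [← harc0] at this
      exact (gword (a 0)).1 this
    have hw1 : w (a 1).val = true := by
      have := hab 1 1
      rw [← harc1] at this
      exact (gword (a 1)).1 this
    obtain ⟨hc0, _⟩ := (hg (a 0)).1 hw0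
    obtain ⟨hc1, _⟩ := (hg (a 1)).1 hw1
    rw [harc0] at hc0
    rw [harc1] at hc1
    have k1 : ht w (a 0).val < ht w (a 1).val := by
      refine hc0.2.2 _ ha01 ?_
      have := hab 1 0
      exact le_of_lt this
    have k2 : ht w (a 1).val < ht w ((b 0).val + 1) := by
      refine hc1.2.2 _ ?_ ?_
      · have := hab 1 0; omega
      · have := hb01; omega
    have k3 : ht w ((b 0).val + 1) = ht w (a 0).val := hc0.2.1
    omega
  · exact gword


section MatchingWord

variable {M : ℕ} (f : Equiv.Perm (Fin M))

/-- The word of a matching. -/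
def wmf : ℕ → Bool := fun k => if h : k < M then decide ((⟨k, h⟩ : Fin M) < f ⟨k, h⟩) else true

/-- The partner function as a map on `ℕ`. -/
def mu : ℕ → ℕ := fun k => if h : k < M then (f ⟨k, h⟩ : ℕ) else 0

variable {f}

lemma wmf_true {k : ℕ} (h : k < M) : wmf f k = true ↔ (⟨k, h⟩ : Fin M) < f ⟨k, h⟩ := by
  simp [wmf, h]

lemma wmf_false (hm : IsMatchingInv f) {k : ℕ} (h : k < M) :
    wmf f k = false ↔ f ⟨k, h⟩ < (⟨k, h⟩ : Fin M) := by
  have hne := (hm ⟨k, h⟩).2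
  simp only [wmf, h, dif_pos]
  rcases lt_trichotomy (f ⟨k, h⟩) (⟨k, h⟩ : Fin M) with hlt | he | hgt
  · simp [hlt, not_lt_of_gt hlt]
  · exact absurd he hne
  · simp [hgt, not_lt_of_gt hgt]

lemma mu_lt {k : ℕ} (h : k < M) : mu f k < M := by
  simp only [mu, h, dif_pos]
  exact (f ⟨k, h⟩).isLt

lemma mu_val {k : ℕ} (h : k < M) : mu f k = (f ⟨k, h⟩ : ℕ) := by simp [mu, h]

lemma mu_injOn (s : Finset ℕ) (hs : ∀ x ∈ s, x < M) : Set.InjOn (mu f) s := by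
  intro x hx y hy hxy
  have hxM := hs x hx
  have hyM := hs y hy
  rw [mu_val hxM, mu_val hyM] at hxy
  have : f ⟨x, hxM⟩ = f ⟨y, hyM⟩ := Fin.ext hxy
  have := f.injective this
  exact congrArg Fin.val this

/-- A closer maps to an opener under `mu`. -/
lemma mu_opener (hm : IsMatchingInv f) {c : ℕ} (hc : c < M) (hcl : wmf f c = false) :
    mu f c < c ∧ wmf f (mu f c) = true := by
  have h1 : f ⟨c, hc⟩ < (⟨c, hc⟩ : Fin M) := (wmf_false hm hc).1 hcl
  have h2 : mu f c = (f ⟨c, hc⟩ : ℕ) := mu_val hc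
  constructor
  · rw [h2]; exact h1
  · have hmu : mu f c < M := mu_lt hc
    rw [wmf_true hmu]
    have he : (⟨mu f c, hmu⟩ : Fin M) = f ⟨c, hc⟩ := Fin.ext h2
    rw [he, (hm ⟨c, hc⟩).1]
    exact h1

lemma mu_closer (hm : IsMatchingInv f) {c : ℕ} (hc : c < M) (hcl : wmf f c = true) :
    c < mu f c ∧ wmf f (mu f c) = false := by
  have h1 : (⟨c, hc⟩ : Fin M) < f ⟨c, hc⟩ := (wmf_true hc).1 hcl
  have h2 : mu f c = (f ⟨c, hc⟩ : ℕ) := mu_val hc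
  constructor
  · rw [h2]; exact h1
  · have hmu : mu f c < M := mu_lt hc
    rw [wmf_false hm hmu]
    have he : (⟨mu f c, hmu⟩ : Fin M) = f ⟨c, hc⟩ := Fin.ext h2
    rw [he, (hm ⟨c, hc⟩).1]
    exact h1

/-- Prefixes of the word of a matching are nonnegative. -/
lemma match_ok (hm : IsMatchingInv f) : ∀ k, k ≤ M → 0 ≤ ht (wmf f) k := by
  intro k hk
  rw [ht_eq_sum, sum_eps]
  have hle : ((Finset.range k).filter (fun i => wmf f i = false)).card ≤
      ((Finset.range k).filter (fun i => wmf f i = true)).card := by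
    apply Finset.card_le_card_of_injOn (mu f)
    · intro c hcmem
      simp only [Finset.mem_coe, Finset.mem_filter, Finset.mem_range] at hcmem ⊢
      have hcM : c < M := lt_of_lt_of_le hcmem.1 hk
      obtain ⟨h1, h2⟩ := mu_opener hm hcM hcmem.2
      exact ⟨lt_trans h1 hcmem.1, h2⟩
    · apply mu_injOn
      intro x hx
      simp only [Finset.mem_filter, Finset.mem_range] at hx
      omega
  omega

/-- Interval property for noncrossing matchings. -/
lemma interval_prop (hm : IsMatchingInv f) (hnc : ¬ HasCrossing f 2) {i j k : Fin M}
    (harc : f i = j) (hij : i < j) (hk1 : i < k) (hk2 : k < j) : i < f k ∧ f k < j := by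
  have hfj : f j = i := by rw [← harc, (hm i).1]
  have hki : f k ≠ k := (hm k).2
  rcases lt_or_gt_of_ne hki with h | h
  · -- closer
    have hne : f k ≠ i := by
      intro e
      have : f (f k) = f i := congrArg f e
      rw [(hm k).1, harc] at this
      exact absurd this (ne_of_lt hk2)
    rcases lt_trichotomy (f k) i with hlt | he | hgt
    · exact absurd (mk_crossing f hlt hk1 hk2 ((hm k).1) harc) hnc
    · exact absurd he hne
    · exact ⟨hgt, lt_trans h hk2⟩
  · -- opener
    have hne : f k ≠ j := by
      intro e
      have : f (f k) = f j := congrArg f e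
      rw [(hm k).1, hfj] at this
      exact absurd this (ne_of_gt hk1)
    rcases lt_trichotomy (f k) j with hlt | he | hgt
    · exact ⟨lt_trans hk1 h, hlt⟩
    · exact absurd he hne
    · exact absurd (mk_crossing f hk1 hk2 hgt harc rfl) hnc

/-- Every arc of a noncrossing matching satisfies `Char`. -/
lemma arc_char (hm : IsMatchingInv f) (hnc : ¬ HasCrossing f 2) {i j : Fin M}
    (harc : f i = j) (hij : i < j) : Char (wmf f) i.val j.val := by
  have hwi : wmf f i.val = true := (wmf_true i.isLt).2 (by rw [Fin.eta, harc]; exact hij)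
  have hwj : wmf f j.val = false := by
    rw [wmf_false hm j.isLt]
    have : f j = i := by rw [← harc, (hm i).1]
    rw [Fin.eta, this]; exact hij
  have hstepi : ht (wmf f) (i.val + 1) = ht (wmf f) i.val + 1 := by
    rw [ht_succ, hwi]; rfl
  -- interval counting: closers in (i, k) inject into openers in (i, k), for k ≤ j
  have hcount : ∀ k, i.val < k → k ≤ j.val →
      ((Finset.Ico (i.val+1) k).filter (fun c => wmf f c = false)).card ≤
      ((Finset.Ico (i.val+1) k).filter (fun c => wmf f c = true)).card := by
    intro k hk1 hk2
    apply Finset.card_le_card_of_injOn (mu f)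
    · intro c hcmem
      simp only [Finset.mem_coe, Finset.mem_filter, Finset.mem_Ico] at hcmem ⊢
      have hcM : c < M := by have := j.isLt; omega
      have hcfin : (⟨c, hcM⟩ : Fin M) < j := by
        show c < j.val; omega
      have hifin : i < (⟨c, hcM⟩ : Fin M) := by
        show i.val < c; omega
      obtain ⟨hlt, hop⟩ := mu_opener hm hcM hcmem.2
      obtain ⟨hgt, _⟩ := interval_prop hm hnc harc hij hifin hcfin
      have : i.val < mu f c := by
        have := mu_val (f := f) hcM
        rw [this]; exact hgt
      exact ⟨⟨by omega, by omega⟩, hop⟩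
    · apply mu_injOn
      intro x hx
      simp only [Finset.mem_filter, Finset.mem_Ico] at hx
      have := j.isLt; omega
  have hmid : ∀ k, i.val < k → k ≤ j.val → ht (wmf f) i.val < ht (wmf f) k := by
    intro k hk1 hk2
    have hd := ht_diff (wmf f) (show i.val + 1 ≤ k by omega)
    rw [sum_eps] at hd
    have := hcount k hk1 hk2
    omega
  refine ⟨hij, ?_, hmid⟩
  -- equality at j+1 : openers in (i,j) inject into closers too
  have hcount2 :
      ((Finset.Ico (i.val+1) j.val).filter (fun c => wmf f c = true)).card ≤
      ((Finset.Ico (i.val+1) j.val).filter (fun c => wmf f c = false)).card := by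
    apply Finset.card_le_card_of_injOn (mu f)
    · intro c hcmem
      simp only [Finset.mem_coe, Finset.mem_filter, Finset.mem_Ico] at hcmem ⊢
      have hcM : c < M := by have := j.isLt; omega
      have hcfin : (⟨c, hcM⟩ : Fin M) < j := by show c < j.val; omega
      have hifin : i < (⟨c, hcM⟩ : Fin M) := by show i.val < c; omega
      obtain ⟨hlt, hcl⟩ := mu_closer hm hcM hcmem.2
      obtain ⟨_, hlt2⟩ := interval_prop hm hnc harc hij hifin hcfin
      have hmuval : mu f c = ((f ⟨c, hcM⟩ : Fin M) : ℕ) := mu_val hcM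
      have : mu f c < j.val := by rw [hmuval]; exact hlt2
      exact ⟨⟨by omega, this⟩, hcl⟩
    · apply mu_injOn
      intro x hx
      simp only [Finset.mem_filter, Finset.mem_Ico] at hx
      have := j.isLt; omega
  have hd := ht_diff (wmf f) (show i.val + 1 ≤ j.val by omega)
  rw [sum_eps] at hd
  have hstepj : ht (wmf f) (j.val + 1) = ht (wmf f) j.val - 1 := by
    rw [ht_succ, hwj]; simp [eps]; ring
  have hcc := Nat.le_antisymm hcount2 (hcount j.val hij (le_refl _))
  rw [hcc] at hd
  omega

/-- Uniqueness: a noncrossing matching is determined by its word. -/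
lemma matching_unique {f f' : Equiv.Perm (Fin M)} (hm : IsMatchingInv f)
    (hm' : IsMatchingInv f') (hnc : ¬ HasCrossing f 2) (hnc' : ¬ HasCrossing f' 2)
    (hw : wmf f = wmf f') : f = f' := by
  apply Equiv.ext
  intro i
  rcases lt_trichotomy i (f i) with h | h | h
  · have hwi : wmf f i.val = true := (wmf_true i.isLt).2 (by rw [Fin.eta]; exact h)
    have hwi' : wmf f' i.val = true := by rw [← hw]; exact hwi
    have h' : i < f' i := by
      have := (wmf_true (f := f') i.isLt).1 hwi'
      rwa [Fin.eta] at this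
    have c1 := arc_char hm hnc rfl h
    have c2 := arc_char hm' hnc' rfl h'
    rw [hw] at c1
    exact Fin.ext (charUniqR c1 c2)
  · exact absurd h.symm (hm i).2
  · have hwi : wmf f i.val = false := by
      rw [wmf_false hm i.isLt, Fin.eta]; exact h
    have hwi' : wmf f' i.val = false := by rw [← hw]; exact hwi
    have h' : f' i < i := by
      have := (wmf_false hm' i.isLt).1 hwi'
      rwa [Fin.eta] at this
    have c1 := arc_char hm hnc ((hm i).1) h
    have c2 := arc_char hm' hnc' ((hm' i).1) h'
    rw [hw] at c1
    exact Fin.ext (charUniqL c1 c2)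

end MatchingWord


lemma wmf_apal {M : ℕ} {f : Equiv.Perm (Fin M)} (hm : IsMatchingInv f)
    (hsym : IsBilatSym f) : ∀ k, k < M → wmf f (M-1-k) = !(wmf f k) := by
  intro k hk
  have hkM : M - 1 - k < M := by omega
  set i : Fin M := ⟨k, hk⟩ with hidef
  have hrev : (⟨M-1-k, hkM⟩ : Fin M) = i.rev := by
    apply Fin.ext
    rw [Fin.val_rev]
    show M - 1 - k = M - (k + 1)
    omega
  have e1 : wmf f (M-1-k) = decide ((⟨M-1-k, hkM⟩ : Fin M) < f ⟨M-1-k, hkM⟩) := by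
    simp [wmf, hkM]
  rw [hrev, hsym i] at e1
  have e2 : (i.rev < (f i).rev) ↔ (f i < i) := Fin.rev_lt_rev
  have e3 : wmf f k = decide (i < f i) := by simp [wmf, hk, hidef]
  rw [e1, e3]
  have hne := (hm i).2
  rcases lt_trichotomy (f i) i with h | h | h
  · simp [e2.2 h, h, not_lt_of_gt h]
  · exact absurd h hne
  · have hnr : ¬ (i.rev < (f i).rev) := fun hh => absurd (e2.1 hh) (not_lt_of_gt h)
    simp [h, not_lt_of_gt h, hnr]

section BallotDef

/-- Padding a finite word to an infinite one. -/
def pad {N : ℕ} (w : Fin N → Bool) : ℕ → Bool := fun k => if h : k < N then w ⟨k, h⟩ else true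

/-- Antipalindromic extension of a half-word. -/
def pad2 {N : ℕ} (w : Fin N → Bool) : ℕ → Bool := fun k =>
  if k < N then pad w k else if k < 2*N then !(pad w (2*N-1-k)) else true

def BallotP {N : ℕ} (w : Fin N → Bool) : Prop := ∀ k, k ≤ N → 0 ≤ ht (pad w) k

lemma pad2_agree {N : ℕ} (w : Fin N → Bool) : ∀ k, k < N → pad2 w k = pad w k := by
  intro k hk; simp [pad2, hk]

lemma pad2_apal {N : ℕ} (w : Fin N → Bool) : ∀ k, k < 2*N → pad2 w (2*N-1-k) = !(pad2 w k) := by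
  intro k hk
  rcases Nat.lt_or_ge k N with h | h
  · have h2 : ¬ (2*N-1-k < N) := by omega
    have h3 : 2*N-1-k < 2*N := by omega
    have h4 : 2*N-1-(2*N-1-k) = k := by omega
    simp only [pad2, if_neg h2, if_pos h3, if_pos h, h4]
  · have h2 : 2*N-1-k < N := by omega
    have h5 : ¬ (k < N) := by omega
    simp only [pad2, if_pos h2, if_neg h5, if_pos hk, Bool.not_not]

lemma pad2_ok {N : ℕ} (w : Fin N → Bool) (hb : BallotP w) :
    ∀ k, k ≤ 2*N → 0 ≤ ht (pad2 w) k := by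
  have hagree : ∀ k, k ≤ N → ht (pad2 w) k = ht (pad w) k := by
    intro k hk
    exact ht_congr (fun i hi => pad2_agree w i (by omega))
  intro k hk
  rcases Nat.lt_or_ge k (N+1) with h' | h'
  · rw [hagree k (by omega)]; exact hb k (by omega)
  · have := ht_refl (pad2_apal w) k hk
    rw [← this, hagree _ (by omega)]
    exact hb _ (by omega)

end BallotDef

/-- The main bijection lemma: symmetric noncrossing matchings on `Fin (2N)`
are equinumerous with ballot words of length `N`. -/
lemma card_S_eq_card_ballot (N : ℕ) :
    Nat.card {f : Equiv.Perm (Fin (2*N)) //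
        IsMatchingInv f ∧ IsBilatSym f ∧ ¬ HasCrossing f 2} =
    Nat.card {w : Fin N → Bool // BallotP w} := by
  have word_ballot : ∀ (f : Equiv.Perm (Fin (2*N))), IsMatchingInv f →
      BallotP (fun k : Fin N => wmf f k.val) := by
    intro f hm k hk
    have : ht (pad fun k : Fin N => wmf f k.val) k = ht (wmf f) k := by
      apply ht_congr
      intro i hi
      have hiN : i < N := by omega
      simp [pad, hiN]
    rw [this]
    exact match_ok hm k (by omega)
  apply Nat.card_congr
  apply Equiv.ofBijective (f := fun fp =>
    (⟨fun k => wmf fp.1 k.val, word_ballot fp.1 fp.2.1⟩ : {w : Fin N → Bool // BallotP w}))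
  constructor
  · -- injectivity
    rintro ⟨f, hm, hsym, hnc⟩ ⟨f', hm', hsym', hnc'⟩ he
    simp only [Subtype.mk.injEq] at he ⊢
    have hhalf : ∀ k, k < N → wmf f k = wmf f' k := by
      intro k hk
      exact congrFun he ⟨k, hk⟩
    have hfull : wmf f = wmf f' := by
      funext k
      rcases Nat.lt_or_ge k (2*N) with hkM | hkM
      · rcases Nat.lt_or_ge k N with h | h
        · exact hhalf k h
        · have hk' : 2*N-1-k < N := by omega
          have e : 2*N-1-(2*N-1-k) = k := by omega
          have a1 := wmf_apal hm hsym (2*N-1-k) (by omega)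
          have a2 := wmf_apal hm' hsym' (2*N-1-k) (by omega)
          rw [e] at a1 a2
          rw [a1, a2, hhalf _ hk']
      · simp [wmf, not_lt_of_ge hkM]
    exact matching_unique hm hm' hnc hnc' hfull
  · -- surjectivity
    rintro ⟨w, hb⟩
    obtain ⟨f, hm, hsym, hnc, hword⟩ :=
      exists_matching N (pad2 w) (pad2_apal w) (pad2_ok w hb)
    refine ⟨⟨f, hm, hsym, hnc⟩, ?_⟩
    apply Subtype.ext
    funext k
    show wmf f k.val = w k
    have hkM : (k : ℕ) < 2*N := by have := k.isLt; omega
    have h1 : wmf f k.val = true ↔ (⟨k.val, hkM⟩ : Fin (2*N)) < f ⟨k.val, hkM⟩ :=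
      wmf_true hkM
    have h2 := hword ⟨k.val, hkM⟩
    have h3 : pad2 w k.val = w k := by
      rw [pad2_agree w k.val k.isLt]
      simp [pad]
    rw [← h3]
    rcases Bool.eq_false_or_eq_true (pad2 w k.val) with hv | hv <;>
      rcases Bool.eq_false_or_eq_true (wmf f k.val) with hv2 | hv2 <;>
      simp_all


section Counting

lemma ht_le (w : ℕ → Bool) : ∀ k, ht w k ≤ k := by
  intro k
  induction k with
  | zero => simp [ht]
  | succ k ih =>
      rw [ht_succ]
      rcases eps_cases (w k) with ⟨he, _⟩ | ⟨he, _⟩ <;> rw [he] <;> push_cast <;> omega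

lemma ht_parity (w : ℕ → Bool) : ∀ k, ∃ a b : ℕ, a + b = k ∧ ht w k = (a : ℤ) - b := by
  intro k
  induction k with
  | zero => exact ⟨0, 0, rfl, by simp [ht]⟩
  | succ k ih =>
      obtain ⟨a, b, hab, hht⟩ := ih
      rcases eps_cases (w k) with ⟨he, _⟩ | ⟨he, _⟩
      · exact ⟨a+1, b, by omega, by rw [ht_succ, he, hht]; push_cast; ring⟩
      · exact ⟨a, b+1, by omega, by rw [ht_succ, he, hht]; push_cast; ring⟩

/-- number of ballot words of length `N` with final height `t` -/
noncomputable def cB (N : ℕ) (t : ℤ) : ℕ :=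
  Nat.card {w : Fin N → Bool // BallotP w ∧ ht (pad w) N = t}

lemma cB_neg {N : ℕ} {t : ℤ} (h : t < 0) : cB N t = 0 := by
  rw [cB]
  have : IsEmpty {w : Fin N → Bool // BallotP w ∧ ht (pad w) N = t} := by
    refine ⟨fun w => ?_⟩
    have := w.2.1 N (le_refl N)
    rw [w.2.2] at this
    omega
  exact Nat.card_of_isEmpty

lemma cB_gt {N : ℕ} {t : ℤ} (h : (N : ℤ) < t) : cB N t = 0 := by
  rw [cB]
  have : IsEmpty {w : Fin N → Bool // BallotP w ∧ ht (pad w) N = t} := by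
    refine ⟨fun w => ?_⟩
    have := ht_le (pad w.1) N
    rw [w.2.2] at this
    omega
  exact Nat.card_of_isEmpty

lemma cB_zero : cB 0 0 = 1 := by
  rw [cB]
  have : Unique {w : Fin 0 → Bool // BallotP w ∧ ht (pad w) 0 = 0} := by
    refine ⟨⟨⟨fun i => i.elim0, ?_, rfl⟩⟩, ?_⟩
    · intro k hk
      interval_cases k
      simp [ht]
    · intro w
      apply Subtype.ext
      funext i
      exact i.elim0
  exact Nat.card_unique

lemma pad_init {N : ℕ} (w : Fin (N+1) → Bool) {i : ℕ} (hi : i < N) :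
    pad (Fin.init w) i = pad w i := by
  have hi' : i < N + 1 := by omega
  simp only [pad, dif_pos hi, dif_pos hi', Fin.init]
  congr 1

lemma pad_last {N : ℕ} (w : Fin (N+1) → Bool) : pad w N = w (Fin.last N) := by
  have h : N < N + 1 := by omega
  simp only [pad, dif_pos h]
  rfl

lemma pad_snoc {N : ℕ} (u : Fin N → Bool) (b : Bool) {i : ℕ} (hi : i < N) :
    pad (Fin.snoc u b) i = pad u i := by
  have hi' : i < N + 1 := by omega
  simp only [pad, dif_pos hi, dif_pos hi']
  have : (⟨i, hi'⟩ : Fin (N+1)) = Fin.castSucc ⟨i, hi⟩ := rfl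
  rw [this, Fin.snoc_castSucc]

lemma pad_snoc_last {N : ℕ} (u : Fin N → Bool) (b : Bool) : pad (Fin.snoc u b) N = b := by
  rw [pad_last, Fin.snoc_last]

lemma cB_rec (N : ℕ) (t : ℤ) (ht0 : 0 ≤ t) :
    cB (N+1) t = cB N (t-1) + cB N (t+1) := by
  rw [cB, cB, cB, ← Nat.card_sum]
  apply Nat.card_congr
  have htinit : ∀ (w : Fin (N+1) → Bool) (k : ℕ), k ≤ N →
      ht (pad (Fin.init w)) k = ht (pad w) k :=
    fun w k hk => ht_congr (fun i hi => pad_init w (by omega))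
  have htsnoc : ∀ (u : Fin N → Bool) (b : Bool) (k : ℕ), k ≤ N →
      ht (pad (Fin.snoc u b)) k = ht (pad u) k :=
    fun u b k hk => ht_congr (fun i hi => pad_snoc u b (by omega))
  have htsnoc1 : ∀ (u : Fin N → Bool) (b : Bool),
      ht (pad (Fin.snoc u b)) (N+1) = ht (pad u) N + eps b := by
    intro u b
    rw [ht_succ, pad_snoc_last, htsnoc u b N (le_refl N)]
  have epsT : eps true = 1 := rfl
  have epsF : eps false = -1 := rfl
  have pfT : ∀ (w : Fin (N+1) → Bool), (BallotP w ∧ ht (pad w) (N+1) = t) →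
      w (Fin.last N) = true → BallotP (Fin.init w) ∧ ht (pad (Fin.init w)) N = t - 1 := by
    intro w hw h
    have e := ht_succ (pad w) N
    rw [pad_last, h, epsT] at e
    refine ⟨fun k hk => ?_, ?_⟩
    · rw [htinit w k hk]; exact hw.1 k (by omega)
    · rw [htinit w N (le_refl N)]
      have := hw.2
      omega
  have pfF : ∀ (w : Fin (N+1) → Bool), (BallotP w ∧ ht (pad w) (N+1) = t) →
      w (Fin.last N) = false → BallotP (Fin.init w) ∧ ht (pad (Fin.init w)) N = t + 1 := by
    intro w hw h
    have e := ht_succ (pad w) N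
    rw [pad_last, h, epsF] at e
    refine ⟨fun k hk => ?_, ?_⟩
    · rw [htinit w k hk]; exact hw.1 k (by omega)
    · rw [htinit w N (le_refl N)]
      have := hw.2
      omega
  have pfA : ∀ p : {u : Fin N → Bool // BallotP u ∧ ht (pad u) N = t - 1},
      BallotP (Fin.snoc p.1 true) ∧ ht (pad (Fin.snoc p.1 true)) (N+1) = t := by
    intro p
    have e := htsnoc1 p.1 true
    rw [epsT, p.2.2] at e
    refine ⟨fun k hk => ?_, by omega⟩
    rcases Nat.lt_or_ge k (N+1) with h | h
    · rw [htsnoc p.1 true k (by omega)]; exact p.2.1 k (by omega)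
    · have hk1 : k = N + 1 := by omega
      rw [hk1]; omega
  have pfB : ∀ p : {u : Fin N → Bool // BallotP u ∧ ht (pad u) N = t + 1},
      BallotP (Fin.snoc p.1 false) ∧ ht (pad (Fin.snoc p.1 false)) (N+1) = t := by
    intro p
    have e := htsnoc1 p.1 false
    rw [epsF, p.2.2] at e
    refine ⟨fun k hk => ?_, by omega⟩
    rcases Nat.lt_or_ge k (N+1) with h | h
    · rw [htsnoc p.1 false k (by omega)]; exact p.2.1 k (by omega)
    · have hk1 : k = N + 1 := by omega
      rw [hk1]; omega
  refine ⟨fun w => if h : w.1 (Fin.last N) = true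
      then Sum.inl ⟨Fin.init w.1, pfT w.1 w.2 h⟩
      else Sum.inr ⟨Fin.init w.1, pfF w.1 w.2 (by
        cases hv : w.1 (Fin.last N)
        · rfl
        · exact absurd hv h)⟩,
    fun x => Sum.elim (fun p => ⟨Fin.snoc p.1 true, pfA p⟩)
      (fun p => ⟨Fin.snoc p.1 false, pfB p⟩) x, ?_, ?_⟩
  · rintro ⟨w, hw⟩
    by_cases h : w (Fin.last N) = true
    · simp only [dif_pos h, Sum.elim_inl]
      apply Subtype.ext
      show Fin.snoc (Fin.init w) true = w
      rw [← h, Fin.snoc_init_self]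
    · simp only [dif_neg h, Sum.elim_inr]
      apply Subtype.ext
      show Fin.snoc (Fin.init w) false = w
      have hb : w (Fin.last N) = false := by
        cases hv : w (Fin.last N)
        · rfl
        · exact absurd hv h
      rw [← hb, Fin.snoc_init_self]
  · rintro (p | p)
    · show (if h : (Fin.snoc p.1 true : Fin (N+1) → Bool) (Fin.last N) = true
          then _ else _) = Sum.inl p
      rw [dif_pos (show (Fin.snoc p.1 true : Fin (N+1) → Bool) (Fin.last N) = true from
        Fin.snoc_last _ _)]
      congr 1
      apply Subtype.ext
      simp only [Sum.elim_inl]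
      exact Fin.init_snoc _ _
    · show (if h : (Fin.snoc p.1 false : Fin (N+1) → Bool) (Fin.last N) = true
          then _ else _) = Sum.inr p
      rw [dif_neg (show ¬ ((Fin.snoc p.1 false : Fin (N+1) → Bool) (Fin.last N) = true) by
        rw [Fin.snoc_last]; simp)]
      congr 1
      apply Subtype.ext
      simp only [Sum.elim_inr]
      exact Fin.init_snoc _ _

end Counting


section ClosedForm

/-- ballot numbers -/
def EB (N : ℕ) : ℕ → ℕ
  | 0 => 1
  | (j+1) => Nat.choose N (j+1) - Nat.choose N j

lemma choose_le_succ_half {n k : ℕ} (h : 2*(k+1) ≤ n+1) : n.choose k ≤ n.choose (k+1) := by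
  have hid := Nat.choose_succ_right_eq n k
  have h1 : k + 1 ≤ n - k := by omega
  have h2 : n.choose k * (k+1) ≤ n.choose k * (n-k) := Nat.mul_le_mul_left _ h1
  rw [← hid] at h2
  exact Nat.le_of_mul_le_mul_right h2 (by omega)

lemma choose_succ_le_half {n k : ℕ} (h : n+1 ≤ 2*(k+1)) : n.choose (k+1) ≤ n.choose k := by
  have hid := Nat.choose_succ_right_eq n k
  rcases le_or_gt (k+1) n with hkn | hkn
  · have h1 : n - k ≤ k + 1 := by omega
    have h2 : n.choose k * (n-k) ≤ n.choose k * (k+1) := Nat.mul_le_mul_left _ h1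
    rw [← hid] at h2
    exact Nat.le_of_mul_le_mul_right h2 (by omega)
  · rw [Nat.choose_eq_zero_of_lt hkn]
    exact Nat.zero_le _

lemma EB_zero_of_big {N j : ℕ} (h : N + 1 ≤ 2*(j+1)) : EB N (j+1) = 0 :=
  Nat.sub_eq_zero_of_le (choose_succ_le_half h)

lemma cB_formula : ∀ N j : ℕ, cB N ((N : ℤ) - 2*j) = EB N j := by
  intro N
  induction N with
  | zero =>
      intro j
      match j with
      | 0 => exact cB_zero
      | (j+1) =>
          rw [cB_neg (by push_cast; omega), EB]
          rw [Nat.choose_eq_zero_of_lt (by omega)]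
          omega
  | succ N ih =>
      intro j
      rcases le_or_gt (2*j) (N+1) with hj | hj
      · have ht0 : (0:ℤ) ≤ (N+1 : ℕ) - 2*j := by push_cast; omega
        rw [show ((N+1 : ℕ) : ℤ) = (N:ℤ)+1 by push_cast; ring] at ht0 ⊢
        rw [cB_rec N _ ht0]
        match j with
        | 0 =>
            have e1 : (N:ℤ) + 1 - 2*(0:ℕ) - 1 = (N:ℤ) - 2*(0:ℕ) := by push_cast; ring
            have e2 : (N:ℤ) + 1 - 2*(0:ℕ) + 1 = (N:ℤ) + 2 := by push_cast; ring
            rw [e1, e2, ih 0, cB_gt (by omega)]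
            rfl
        | (j+1) =>
            have e1 : (N:ℤ) + 1 - 2*((j:ℕ)+1:ℕ) - 1 = (N:ℤ) - 2*((j+1:ℕ):ℕ) := by
              push_cast; ring
            have e2 : (N:ℤ) + 1 - 2*((j:ℕ)+1:ℕ) + 1 = (N:ℤ) - 2*(j:ℕ) := by
              push_cast; ring
            rw [e1, e2, ih (j+1), ih j]
            -- now pure choose arithmetic
            have p1 : Nat.choose (N+1) (j+1) = Nat.choose N j + Nat.choose N (j+1) :=
              Nat.choose_succ_succ N j
            have hineq1 : Nat.choose N j ≤ Nat.choose N (j+1) := choose_le_succ_half (by omega)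
            match j with
            | 0 =>
                show (Nat.choose N 1 - Nat.choose N 0) + 1
                    = Nat.choose (N+1) 1 - Nat.choose (N+1) 0
                rw [Nat.choose_zero_right, Nat.choose_zero_right, Nat.choose_one_right,
                  Nat.choose_one_right]
                have hN : 1 ≤ N := by omega
                omega
            | (j+1) =>
                show (Nat.choose N (j+2) - Nat.choose N (j+1))
                      + (Nat.choose N (j+1) - Nat.choose N j)
                    = Nat.choose (N+1) (j+2) - Nat.choose (N+1) (j+1)
                have p2 : Nat.choose (N+1) (j+2) = Nat.choose N (j+1) + Nat.choose N (j+2) :=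
                  Nat.choose_succ_succ N (j+1)
                have p3 : Nat.choose (N+1) (j+1) = Nat.choose N j + Nat.choose N (j+1) :=
                  Nat.choose_succ_succ N j
                have hineq2 : Nat.choose N (j+1) ≤ Nat.choose N (j+2) :=
                  choose_le_succ_half (by omega)
                have hineq3 : Nat.choose N j ≤ Nat.choose N (j+1) :=
                  choose_le_succ_half (by omega)
                omega
      · -- 2j > N+1 : empty
        have : ((N+1:ℕ) : ℤ) - 2*j < 0 := by push_cast; omega
        rw [cB_neg this]
        match j with
        | (j+1) => exact (EB_zero_of_big (by omega)).symm

lemma sum_EB (N : ℕ) : ∀ m : ℕ, ∑ j ∈ Finset.range (m+1), EB N j = Nat.choose N (min m (N/2))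
  | 0 => by simp [EB]
  | (m+1) => by
      rw [Finset.sum_range_succ, sum_EB N m]
      rcases le_or_gt (2*(m+1)) N with h | h
      · have hmin1 : min m (N/2) = m := by omega
        have hmin2 : min (m+1) (N/2) = m+1 := by omega
        rw [hmin1, hmin2]
        show Nat.choose N m + (Nat.choose N (m+1) - Nat.choose N m) = Nat.choose N (m+1)
        have := choose_le_succ_half (show 2*(m+1) ≤ N+1 by omega)
        omega
      · have hmin : min (m+1) (N/2) = min m (N/2) := by omega
        rw [hmin, EB_zero_of_big (by omega)]
        omega

end ClosedForm

section Assemble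

lemma card_ballot (N : ℕ) :
    Nat.card {w : Fin N → Bool // BallotP w} = Nat.choose N (N/2) := by
  classical
  have hsplit : Nat.card {w : Fin N → Bool // BallotP w} =
      ∑ j ∈ Finset.range (N+1), cB N ((N:ℤ) - 2*j) := by
    have hcongr : Nat.card {w : Fin N → Bool // BallotP w} =
        Nat.card (Σ j : Fin (N+1),
          {w : Fin N → Bool // BallotP w ∧ ht (pad w) N = (N:ℤ) - 2*(j:ℕ)}) := by
      symm
      apply Nat.card_congr
      apply Equiv.ofBijective (f := fun x => (⟨x.2.1, x.2.2.1⟩ : {w : Fin N → Bool // BallotP w}))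
      constructor
      · rintro ⟨j1, w1, hw1⟩ ⟨j2, w2, hw2⟩ he
        simp only [Subtype.mk.injEq] at he
        have hj : j1 = j2 := by
          have e1 := hw1.2
          have e2 := hw2.2
          rw [he] at e1
          rw [e1] at e2
          have : ((j1:ℕ) : ℤ) = ((j2:ℕ) : ℤ) := by omega
          exact Fin.ext (by exact_mod_cast this)
        subst hj
        exact congrArg (Sigma.mk j1) (Subtype.ext he)
      · rintro ⟨w, hw⟩
        obtain ⟨a, b, hab, hht⟩ := ht_parity (pad w) N
        have hba : (b : ℤ) ≤ a := by
          have := hw N (le_refl N)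
          omega
        refine ⟨⟨⟨b, by omega⟩, ⟨w, hw, ?_⟩⟩, rfl⟩
        show ht (pad w) N = (N:ℤ) - 2*(b:ℕ)
        push_cast
        omega
    rw [hcongr, Nat.card_eq_fintype_card, Fintype.card_sigma]
    rw [← Fin.sum_univ_eq_sum_range (fun j => cB N ((N:ℤ) - 2*j)) (N+1)]
    apply Finset.sum_congr rfl
    intro j _
    rw [cB, Nat.card_eq_fintype_card]
  rw [hsplit]
  have : ∑ j ∈ Finset.range (N+1), cB N ((N:ℤ) - 2*j)
      = ∑ j ∈ Finset.range (N+1), EB N j :=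
    Finset.sum_congr rfl (fun j _ => cB_formula N j)
  rw [this]
  have := sum_EB N N
  rw [min_eq_right (by omega)] at this
  exact this

end Assemble

end Bsm

lemma bsmCount_one (N : ℕ) : bsmCount N 1 = Nat.choose N (N/2) := by
  rw [bsmCount]
  show Nat.card {f : Equiv.Perm (Fin (2*N)) //
      IsMatchingInv f ∧ IsBilatSym f ∧ ¬ HasCrossing f 2} = Nat.choose N (N/2)
  rw [Bsm.card_S_eq_card_ballot N, Bsm.card_ballot N]

/-- For noncrossing (i.e. `2`-noncrossing) bilaterally symmetric matchings:
`bsm_{2n}(1) = C(2n,n)` and `bsm_{2n+1}(1) = (1/2)·C(2n+2, n+1)`. -/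
theorem bsm_one (n : ℕ) :
    bsmCount (2 * n) 1 = Nat.choose (2 * n) n ∧
      (bsmCount (2 * n + 1) 1 : ℚ) = (1 / 2 : ℚ) * Nat.choose (2 * n + 2) (n + 1) := by
  constructor
  · rw [bsmCount_one (2*n), show (2*n)/2 = n by omega]
  · have h1 := bsmCount_one (2*n+1)
    rw [show (2*n+1)/2 = n by omega] at h1
    rw [h1]
    have h3 : Nat.choose (2*n+2) (n+1) = Nat.choose (2*n+1) n + Nat.choose (2*n+1) (n+1) :=
      Nat.choose_succ_succ _ _
    have h4 : Nat.choose (2*n+1) (n+1) = Nat.choose (2*n+1) n := by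
      have := Nat.choose_symm (show n ≤ 2*n+1 by omega)
      rw [show 2*n+1-n = n+1 by omega] at this
      exact this
    have h5 : Nat.choose (2*n+2) (n+1) = 2 * Nat.choose (2*n+1) n := by omega
    rw [h5]
    push_cast
    ring
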